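/- For every t ∈ ℝ and every s ∈ Spec(t), one has |s| ≥ 3/2 − |t|. (This verifies, for the round 3-sphere with magnetic field tη, the magnetic Hijazi inequality |λ^{tη}| ≥ √(n/(4(n−1)) · Y(𝕊³)) / Vol^{1/n} − ‖tη‖, whose right-hand side equals 3/2 − |t| after normalization.) -/
import Mathlib


/-- `f₀(k,p,t) = (1 + t + 2p − k)² + 4(k − p)(p + 1)`. -/
noncomputable def f0 (k p : ℤ) (t : ℝ) : ℝ :=
  (1 + t + 2 * (p : ℝ) - (k : ℝ)) ^ 2 + 4 * ((k : ℝ) - (p : ℝ)) * ((p : ℝ) + 1)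

/-- The spectrum of the magnetic Dirac operator `D^{tη}` on the round 3-sphere of
sectional curvature 1, where `η` is the Reeb one-form of the Hopf fibration. -/
noncomputable def Spec (t : ℝ) : Set ℝ :=
  {s | ∃ k : ℕ, s = 3 / 2 + (k : ℝ) + t} ∪
    {s | ∃ k : ℕ, s = 3 / 2 + (k : ℝ) - t} ∪
    {s | ∃ k p : ℕ, p < k ∧ s = 1 / 2 + Real.sqrt (f0 (k : ℤ) (p : ℤ) t)} ∪
    {s | ∃ k p : ℕ, p < k ∧ s = 1 / 2 - Real.sqrt (f0 (k : ℤ) (p : ℤ) t)}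

lemma sqrt_f0_ge (k p : ℕ) (t : ℝ) (h : p < k) :
    (2 : ℝ) ≤ Real.sqrt (f0 (k : ℤ) (p : ℤ) t) := by
  have hk : (1 : ℝ) ≤ (k : ℝ) - (p : ℝ) := by
    have : (p : ℝ) + 1 ≤ (k : ℝ) := by exact_mod_cast h
    linarith
  have hp : (1 : ℝ) ≤ (p : ℝ) + 1 := by have := Nat.cast_nonneg (α := ℝ) p; linarith
  have h4 : (4 : ℝ) ≤ f0 (k : ℤ) (p : ℤ) t := by
    unfold f0
    push_cast
    nlinarith [sq_nonneg (1 + t + 2 * (p : ℝ) - (k : ℝ))]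
  calc (2 : ℝ) = Real.sqrt 4 := by
        rw [show (4 : ℝ) = 2 ^ 2 by norm_num, Real.sqrt_sq (by norm_num)]
    _ ≤ _ := Real.sqrt_le_sqrt h4

/-- Every element `s` of the magnetic Dirac spectrum of the round 3-sphere satisfies
`|s| ≥ 3/2 − |t|` (the magnetic Hijazi inequality on `𝕊³`). -/
theorem stmt10 (t : ℝ) : ∀ s ∈ Spec t, 3 / 2 - |t| ≤ |s| := by
  intro s hs
  have ht : -|t| ≤ t := neg_abs_le t
  have ht' : t ≤ |t| := le_abs_self t
  rcases hs with ((⟨k, rfl⟩ | ⟨k, rfl⟩) | ⟨k, p, hkp, rfl⟩) | ⟨k, p, hkp, rfl⟩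
  · have : (0:ℝ) ≤ (k:ℝ) := Nat.cast_nonneg k
    calc 3/2 - |t| ≤ 3/2 + (k:ℝ) + t := by linarith
      _ ≤ |3/2 + (k:ℝ) + t| := le_abs_self _
  · have : (0:ℝ) ≤ (k:ℝ) := Nat.cast_nonneg k
    calc 3/2 - |t| ≤ 3/2 + (k:ℝ) - t := by linarith
      _ ≤ |3/2 + (k:ℝ) - t| := le_abs_self _
  · have h2 := sqrt_f0_ge k p t hkp
    have habs : (0:ℝ) ≤ |t| := abs_nonneg t
    calc 3/2 - |t| ≤ 1/2 + Real.sqrt (f0 (k:ℤ) (p:ℤ) t) := by linarith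
      _ ≤ _ := le_abs_self _
  · have h2 := sqrt_f0_ge k p t hkp
    have habs : (0:ℝ) ≤ |t| := abs_nonneg t
    have : |1/2 - Real.sqrt (f0 (k:ℤ) (p:ℤ) t)|
        = Real.sqrt (f0 (k:ℤ) (p:ℤ) t) - 1/2 := by
      rw [abs_of_nonpos (by linarith)]; ring
    rw [this]; linarith
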